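/- The local intersection multiplicity at the origin of the plane curves {z - z² - x⁴ + x²z² = 0} and {xz(1 - z - x² + z²) = 0} in ℂ² equals 5. -/

import Mathlib

open MvPowerSeries Finsupp

noncomputable section

/-- exponent `(a, b)` meaning `x^a z^b` -/
def e2 (a b : ℕ) : Fin 2 →₀ ℕ := single 0 a + single 1 b

@[simp] theorem e2_apply0 (a b : ℕ) : e2 a b 0 = a := by simp [e2]
@[simp] theorem e2_apply1 (a b : ℕ) : e2 a b 1 = b := by simp [e2, Finsupp.single_apply]

theorem eq_e2 (d : Fin 2 →₀ ℕ) : d = e2 (d 0) (d 1) := by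
  ext i; fin_cases i <;> simp

@[simp] theorem e2_le_iff {a b c d : ℕ} : e2 a b ≤ e2 c d ↔ a ≤ c ∧ b ≤ d := by
  rw [Finsupp.le_def]
  constructor
  · intro h; exact ⟨by simpa using h 0, by simpa using h 1⟩
  · rintro ⟨h1, h2⟩ i; fin_cases i <;> simpa

@[simp] theorem e2_sub (a b c d : ℕ) : e2 a b - e2 c d = e2 (a - c) (b - d) := by
  ext i; fin_cases i <;> simp [tsub_apply]

@[simp] theorem e2_add (a b c d : ℕ) : e2 a b + e2 c d = e2 (a + c) (b + d) := by
  ext i; fin_cases i <;> simp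

@[simp] theorem e2_inj {a b c d : ℕ} : e2 a b = e2 c d ↔ a = c ∧ b = d := by
  constructor
  · intro h
    exact ⟨by rw [← e2_apply0 a b, h, e2_apply0], by rw [← e2_apply1 a b, h, e2_apply1]⟩
  · rintro ⟨rfl, rfl⟩; rfl

theorem single0_eq_e2 (n : ℕ) : single (0 : Fin 2) n = e2 n 0 := by simp [e2]
theorem single1_eq_e2 (n : ℕ) : single (1 : Fin 2) n = e2 0 n := by simp [e2]
@[simp] theorem zero_eq_e2 : (0 : Fin 2 →₀ ℕ) = e2 0 0 := by simp [e2]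
@[simp] theorem e2_eq_zero {a b : ℕ} : e2 a b = 0 ↔ a = 0 ∧ b = 0 := by
  rw [zero_eq_e2, e2_inj]

local notation "x" => (MvPowerSeries.X 0 : MvPowerSeries (Fin 2) ℂ)
local notation "z" => (MvPowerSeries.X 1 : MvPowerSeries (Fin 2) ℂ)

theorem xz_pow_eq (c d : ℕ) :
    (x ^ c * z ^ d) = monomial (e2 c d) 1 := by
  rw [X_pow_eq, X_pow_eq, monomial_mul_monomial, one_mul, single0_eq_e2, single1_eq_e2]
  simp

theorem coeff_mono_mul (φ : MvPowerSeries (Fin 2) ℂ) (a b c d : ℕ) :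
    coeff (e2 a b) ((x ^ c * z ^ d) * φ) =
      if c ≤ a ∧ d ≤ b then coeff (e2 (a - c) (b - d)) φ else 0 := by
  rw [xz_pow_eq, coeff_monomial_mul]
  simp only [e2_le_iff, e2_sub, one_mul]

theorem coeff_mul_mono (φ : MvPowerSeries (Fin 2) ℂ) (a b c d : ℕ) :
    coeff (e2 a b) (φ * (x ^ c * z ^ d)) =
      if c ≤ a ∧ d ≤ b then coeff (e2 (a - c) (b - d)) φ else 0 := by
  rw [mul_comm, coeff_mono_mul]

/-- shift in the x-direction -/
def shA (f : MvPowerSeries (Fin 2) ℂ) : MvPowerSeries (Fin 2) ℂ :=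
  fun d => f (e2 (d 0 + 1) (d 1))

/-- shift in the z-direction, restricted to x-degree 0 -/
def shB (f : MvPowerSeries (Fin 2) ℂ) : MvPowerSeries (Fin 2) ℂ :=
  fun d => if d 0 = 0 then f (e2 (d 0) (d 1 + 1)) else 0

theorem coeff_shA (f : MvPowerSeries (Fin 2) ℂ) (a b : ℕ) :
    coeff (e2 a b) (shA f) = f (e2 (a + 1) b) := by
  show f _ = _
  simp [shA]

theorem coeff_shB (f : MvPowerSeries (Fin 2) ℂ) (a b : ℕ) :
    coeff (e2 a b) (shB f) = if a = 0 then f (e2 a (b + 1)) else 0 := by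
  show (if _ then _ else _) = _
  simp [shB]

/-- Taylor split: every 2-variable power series is const + x * A + z * B. -/
theorem split (f : MvPowerSeries (Fin 2) ℂ) :
    f = (MvPowerSeries.C (f (e2 0 0))) + x * shA f + z * shB f := by
  classical
  ext d
  obtain ⟨a, b, rfl⟩ : ∃ a b, d = e2 a b := ⟨d 0, d 1, eq_e2 d⟩
  rw [map_add, map_add, coeff_C, coeff_apply]
  have h1 : coeff (e2 a b) (x * shA f) =
      if 1 ≤ a ∧ 0 ≤ b then coeff (e2 (a - 1) (b - 0)) (shA f) else 0 := by
    have := coeff_mono_mul (shA f) a b 1 0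
    simpa using this
  have h2 : coeff (e2 a b) (z * shB f) =
      if 0 ≤ a ∧ 1 ≤ b then coeff (e2 (a - 0) (b - 1)) (shB f) else 0 := by
    have := coeff_mono_mul (shB f) a b 0 1
    simpa using this
  rw [h1, h2]
  rcases a with _ | a <;> rcases b with _ | b <;>
    simp [coeff_shA, coeff_shB]

/-- the simplified ideal -/
def Jid : Ideal (MvPowerSeries (Fin 2) ℂ) :=
  Ideal.span {(X 1 - X 0 ^ 4 : MvPowerSeries (Fin 2) ℂ), (X 0 ^ 5 : MvPowerSeries (Fin 2) ℂ)}

theorem hz4_mem : (z - x ^ 4) ∈ Jid := Ideal.subset_span (by simp)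
theorem hx5_mem : (x ^ 5) ∈ Jid := Ideal.subset_span (by simp)

theorem hxz_mem : (x * z) ∈ Jid := by
  have : (x * z : MvPowerSeries (Fin 2) ℂ) = x * (z - x ^ 4) + x ^ 5 := by ring
  rw [this]
  exact add_mem (Ideal.mul_mem_left _ _ hz4_mem) hx5_mem

theorem hz2_mem : (z ^ 2) ∈ Jid := by
  have : (z ^ 2 : MvPowerSeries (Fin 2) ℂ) = z * (z - x ^ 4) + x ^ 3 * (x * z) := by ring
  rw [this]
  exact add_mem (Ideal.mul_mem_left _ _ hz4_mem) (Ideal.mul_mem_left _ _ hxz_mem)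

theorem hx4z_mem : (x ^ 4 * z) ∈ Jid := by
  have : (x ^ 4 * z : MvPowerSeries (Fin 2) ℂ) = x ^ 3 * (x * z) := by ring
  rw [this]
  exact Ideal.mul_mem_left _ _ hxz_mem

theorem span_eq :
    Ideal.span
      {(X 1 - X 1 ^ 2 - X 0 ^ 4 + X 0 ^ 2 * X 1 ^ 2 : MvPowerSeries (Fin 2) ℂ),
       (X 0 * X 1 * (1 - X 1 - X 0 ^ 2 + X 1 ^ 2) : MvPowerSeries (Fin 2) ℂ)} = Jid := by
  set φ : MvPowerSeries (Fin 2) ℂ := X 1 - X 1 ^ 2 - X 0 ^ 4 + X 0 ^ 2 * X 1 ^ 2 with hφ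
  set ψ : MvPowerSeries (Fin 2) ℂ := X 0 * X 1 * (1 - X 1 - X 0 ^ 2 + X 1 ^ 2) with hψ
  apply le_antisymm
  · rw [Ideal.span_le, Set.insert_subset_iff, Set.singleton_subset_iff]
    constructor
    · have : φ = (z - x ^ 4) + (x ^ 2 - 1) * z ^ 2 := by rw [hφ]; ring
      rw [this]
      exact add_mem hz4_mem (Ideal.mul_mem_left _ _ hz2_mem)
    · have : ψ = (1 - z - x ^ 2 + z ^ 2) * (x * z) := by rw [hψ]; ring
      rw [this]
      exact Ideal.mul_mem_left _ _ hxz_mem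
  · -- reverse inclusion
    set J0 := Ideal.span {φ, ψ} with hJ0
    have hφm : φ ∈ J0 := Ideal.subset_span (by simp)
    have hψm : ψ ∈ J0 := Ideal.subset_span (by simp)
    have hu : IsUnit (1 - z - x ^ 2 + z ^ 2 : MvPowerSeries (Fin 2) ℂ) := by
      rw [MvPowerSeries.isUnit_iff_constantCoeff]
      simp
    have hxz0 : (x * z) ∈ J0 := by
      obtain ⟨w, hw⟩ := hu.exists_left_inv
      have : (x * z : MvPowerSeries (Fin 2) ℂ) = w * ψ := by
        rw [hψ]
        calc (x * z : MvPowerSeries (Fin 2) ℂ)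
            = (x * z) * (w * (1 - z - x ^ 2 + z ^ 2)) := by rw [hw]; ring
          _ = w * (X 0 * X 1 * (1 - X 1 - X 0 ^ 2 + X 1 ^ 2)) := by ring
      rw [this]
      exact Ideal.mul_mem_left _ _ hψm
    have hx50 : (x ^ 5) ∈ J0 := by
      have : (x ^ 5 : MvPowerSeries (Fin 2) ℂ) =
          (x * z) * (1 - z + x ^ 2 * z) + (-x) * φ := by rw [hφ]; ring
      rw [this]
      exact add_mem (Ideal.mul_mem_right _ _ hxz0) (Ideal.mul_mem_left _ _ hφm)
    have hz20 : (z ^ 2) ∈ J0 := by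
      have huz : IsUnit (1 - z : MvPowerSeries (Fin 2) ℂ) := by
        rw [MvPowerSeries.isUnit_iff_constantCoeff]
        simp
      obtain ⟨w, hw⟩ := huz.exists_left_inv
      have : (z ^ 2 : MvPowerSeries (Fin 2) ℂ) =
          w * (z * φ + (x * z) * (x ^ 3 - x * z ^ 2)) := by
        rw [hφ]
        calc (z ^ 2 : MvPowerSeries (Fin 2) ℂ)
            = (w * (1 - z)) * z ^ 2 := by rw [hw]; ring
          _ = w * (z * (X 1 - X 1 ^ 2 - X 0 ^ 4 + X 0 ^ 2 * X 1 ^ 2) +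
              (x * z) * (x ^ 3 - x * z ^ 2)) := by ring
      rw [this]
      exact Ideal.mul_mem_left _ _
        (add_mem (Ideal.mul_mem_left _ _ hφm) (Ideal.mul_mem_right _ _ hxz0))
    have hz40 : (z - x ^ 4) ∈ J0 := by
      have : (z - x ^ 4 : MvPowerSeries (Fin 2) ℂ) = φ + (1 - x ^ 2) * z ^ 2 := by
        rw [hφ]; ring
      rw [this]
      exact add_mem hφm (Ideal.mul_mem_left _ _ hz20)
    rw [Jid, Ideal.span_le, Set.insert_subset_iff, Set.singleton_subset_iff]
    exact ⟨hz40, hx50⟩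

theorem spanning (f : MvPowerSeries (Fin 2) ℂ) :
    ∃ c : Fin 5 → ℂ,
      f - (∑ k : Fin 5, MvPowerSeries.C (c k) * x ^ (k : ℕ)) ∈ Jid := by
  obtain h0 := split f
  obtain h1 := split (shA f)
  obtain h2 := split (shA (shA f))
  obtain h3 := split (shA (shA (shA f)))
  obtain h4 := split (shA (shA (shA (shA f))))
  obtain hB := split (shB f)
  set c0 := f (e2 0 0)
  set c1 := (shA f) (e2 0 0)
  set c2 := (shA (shA f)) (e2 0 0)
  set c3 := (shA (shA (shA f))) (e2 0 0)
  set c4 := (shA (shA (shA (shA f)))) (e2 0 0)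
  set b := (shB f) (e2 0 0)
  refine ⟨![c0, c1, c2, c3, c4 + b], ?_⟩
  have key : f - (∑ k : Fin 5,
        MvPowerSeries.C (![c0, c1, c2, c3, c4 + b] k) * x ^ (k : ℕ)) =
      MvPowerSeries.C b * (z - x ^ 4) +
        (shA (shA (shA (shA (shA f))))) * x ^ 5 +
        (shB (shA f) + shA (shB f) + x * shB (shA (shA f)) +
          x ^ 2 * shB (shA (shA (shA f))) +
          x ^ 3 * shB (shA (shA (shA (shA f))))) * (x * z) +
        (shB (shB f)) * z ^ 2 := by
    rw [Fin.sum_univ_five]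
    simp only [Matrix.cons_val_zero, Matrix.cons_val_one, Matrix.head_cons,
      Matrix.cons_val_two, Matrix.tail_cons, Matrix.cons_val_three,
      Matrix.cons_val_four, map_add]
    simp only [show ((0:Fin 5):ℕ) = 0 by rfl, show ((1:Fin 5):ℕ) = 1 by rfl,
      show ((2:Fin 5):ℕ) = 2 by rfl, show ((3:Fin 5):ℕ) = 3 by rfl,
      show ((4:Fin 5):ℕ) = 4 by rfl]
    linear_combination h0 + x * h1 + x ^ 2 * h2 + x ^ 3 * h3 + x ^ 4 * h4 + z * hB
  rw [key]
  refine add_mem (add_mem (add_mem ?_ ?_) ?_) ?_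
  · exact Ideal.mul_mem_left _ _ hz4_mem
  · exact Ideal.mul_mem_left _ _ hx5_mem
  · exact Ideal.mul_mem_left _ _ hxz_mem
  · exact Ideal.mul_mem_left _ _ hz2_mem

theorem coeff_key (a b : MvPowerSeries (Fin 2) ℂ) (n m : ℕ) :
    coeff (e2 n m) (a * (z - x ^ 4) + b * x ^ 5) =
      ((if 1 ≤ m then coeff (e2 n (m - 1)) a else 0) -
        (if 4 ≤ n then coeff (e2 (n - 4) m) a else 0)) +
        (if 5 ≤ n then coeff (e2 (n - 5) m) b else 0) := by
  have e1 : a * (z - x ^ 4) = a * ((x ^ 0 * z ^ 1)) - a * ((x ^ 4 * z ^ 0)) := by ring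
  have e2' : b * (x ^ 5 : MvPowerSeries (Fin 2) ℂ) = b * ((x ^ 5 * z ^ 0)) := by ring
  rw [e1, e2', map_add, map_sub, coeff_mul_mono, coeff_mul_mono, coeff_mul_mono]
  simp [Nat.sub_zero]

theorem coeff_poly (c : Fin 5 → ℂ) (d : Fin 2 →₀ ℕ) :
    coeff d (∑ k : Fin 5, MvPowerSeries.C (c k) * x ^ (k : ℕ)) =
      ∑ k : Fin 5, c k * (if d = e2 (k : ℕ) 0 then 1 else 0) := by
  rw [map_sum]
  congr 1
  ext k
  rw [← smul_eq_C_mul, coeff_smul]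
  congr 1
  have : (x ^ (k : ℕ) : MvPowerSeries (Fin 2) ℂ) = x ^ (k : ℕ) * z ^ 0 := by ring
  rw [this, xz_pow_eq, coeff_monomial]

theorem indep (c : Fin 5 → ℂ)
    (h : (∑ k : Fin 5, MvPowerSeries.C (c k) * x ^ (k : ℕ)) ∈ Jid) :
    ∀ k, c k = 0 := by
  rw [Jid, Ideal.mem_span_pair] at h
  obtain ⟨a, b, hab⟩ := h
  -- coefficient functionals applied to both sides
  have key : ∀ n m : ℕ,
      ((if 1 ≤ m then coeff (e2 n (m - 1)) a else 0) -
        (if 4 ≤ n then coeff (e2 (n - 4) m) a else 0)) +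
        (if 5 ≤ n then coeff (e2 (n - 5) m) b else 0) =
      ∑ k : Fin 5, c k * (if e2 n m = e2 (k : ℕ) 0 then 1 else 0) := by
    intro n m
    rw [← coeff_key, ← coeff_poly, hab]
  have h0 := key 0 0
  have h1 := key 1 0
  have h2 := key 2 0
  have h3 := key 3 0
  have h4 := key 4 0
  have h5 := key 0 1
  rw [Fin.sum_univ_five] at h0 h1 h2 h3 h4 h5
  simp only [show ((0:Fin 5):ℕ) = 0 by rfl, show ((1:Fin 5):ℕ) = 1 by rfl,
    show ((2:Fin 5):ℕ) = 2 by rfl, show ((3:Fin 5):ℕ) = 3 by rfl,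
    show ((4:Fin 5):ℕ) = 4 by rfl, e2_inj] at h0 h1 h2 h3 h4 h5
  norm_num at h0 h1 h2 h3 h4 h5
  have hc4 : c 4 = 0 := by rw [← h4, h5, neg_zero]
  intro k
  fin_cases k
  · exact h0.symm
  · exact h1.symm
  · exact h2.symm
  · exact h3.symm
  · exact hc4

open MvPowerSeries in
theorem stmt_2' :
    Module.finrank ℂ
      (MvPowerSeries (Fin 2) ℂ ⧸
        Ideal.span
          {(X 1 - X 1 ^ 2 - X 0 ^ 4 + X 0 ^ 2 * X 1 ^ 2 : MvPowerSeries (Fin 2) ℂ),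
           (X 0 * X 1 * (1 - X 1 - X 0 ^ 2 + X 1 ^ 2) : MvPowerSeries (Fin 2) ℂ)}) = 5 := by
  rw [span_eq]
  set v : Fin 5 → (MvPowerSeries (Fin 2) ℂ ⧸ Jid) :=
    fun k => Ideal.Quotient.mk Jid (x ^ (k : ℕ)) with hv
  have hsmul : ∀ (cc : ℂ) (y : MvPowerSeries (Fin 2) ℂ),
      cc • Ideal.Quotient.mk Jid y =
        Ideal.Quotient.mk Jid (MvPowerSeries.C cc * y) := by
    intro cc y
    rw [← smul_eq_C_mul, ← Ideal.Quotient.mkₐ_eq_mk ℂ Jid, ← map_smul]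
  have li : LinearIndependent ℂ v := by
    rw [Fintype.linearIndependent_iff]
    intro c hc
    have hmk : Ideal.Quotient.mk Jid
        (∑ k : Fin 5, MvPowerSeries.C (c k) * x ^ (k : ℕ)) = 0 := by
      rw [map_sum, ← hc]
      exact Finset.sum_congr rfl fun k _ => (hsmul (c k) _).symm
    rw [Ideal.Quotient.eq_zero_iff_mem] at hmk
    exact indep c hmk
  have sp : ⊤ ≤ Submodule.span ℂ (Set.range v) := by
    rintro q -
    obtain ⟨f, rfl⟩ := Ideal.Quotient.mk_surjective q
    obtain ⟨c, hc⟩ := spanning f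
    have h0 : Ideal.Quotient.mk Jid f =
        Ideal.Quotient.mk Jid (∑ k : Fin 5, MvPowerSeries.C (c k) * x ^ (k : ℕ)) := by
      rw [← sub_eq_zero, ← map_sub, Ideal.Quotient.eq_zero_iff_mem]
      exact hc
    rw [h0, map_sum]
    refine Submodule.sum_mem _ fun k _ => ?_
    rw [← hsmul]
    exact Submodule.smul_mem _ _ (Submodule.subset_span ⟨k, rfl⟩)
  have B : Module.Basis (Fin 5) ℂ (MvPowerSeries (Fin 2) ℂ ⧸ Jid) := Module.Basis.mk li sp
  rw [Module.finrank_eq_card_basis B, Fintype.card_fin]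


open MvPowerSeries in
/-- The local intersection multiplicity at the origin of
`{z - z² - x⁴ + x²z² = 0}` and `{xz(1 - z - x² + z²) = 0}` equals `5`,
where `X 0` plays the role of `x` and `X 1` the role of `z`. -/
theorem stmt_2 :
    Module.finrank ℂ
      (MvPowerSeries (Fin 2) ℂ ⧸
        Ideal.span
          {(X 1 - X 1 ^ 2 - X 0 ^ 4 + X 0 ^ 2 * X 1 ^ 2 : MvPowerSeries (Fin 2) ℂ),
           (X 0 * X 1 * (1 - X 1 - X 0 ^ 2 + X 1 ^ 2) : MvPowerSeries (Fin 2) ℂ)}) = 5 := by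
  exact stmt_2'

end
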